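/- Inclusion of a small ball in the pulled-back middle region: Let P = 0 ∈ Σ with local C^{1,1} graph ψ (ψ(0) = 0, ∇ψ(0) = 0), and let Ψ_P(x', x_n) = (x', x_n − ψ(x')), η(x') = ψ(x')/|x'|², ‖η‖ = ‖η‖_{L^∞(B'_{ρ₀}(0))}. Set ρ₁ = α₋δ/(δ+β), let ρ₂ satisfy 2‖η‖ρ₂ + ‖η‖²ρ₂² < 1/2, and ρ₃ = 2α₋δ/β. If r < θ · min{ δR₁/(6aα₋), 2δR₂/(3α₋), R₁/(12a), θ⁻¹ρ₀, ρ₁, ρ₂, ρ₃ }, then Ψ_P(B_r(P)) ⊂ θU₂. -/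

import Mathlib

open MeasureTheory Metric Set
open scoped Pointwise ENNReal Matrix ComplexConjugate
noncomputable section

/-- Euclidean space `ℝ^n`. -/
abbrev Euc (n : ℕ) := EuclideanSpace ℝ (Fin n)

/-- Partial derivative `∂_i f` of a complex valued function. -/
def pd {m : ℕ} (i : Fin m) (f : Euc m → ℂ) (x : Euc m) : ℂ :=
  fderiv ℝ f x (EuclideanSpace.single i 1)

/-- Partial derivative `∂_i f` of a real valued function. -/
def pdR {m : ℕ} (i : Fin m) (f : Euc m → ℝ) (x : Euc m) : ℝ :=
  fderiv ℝ f x (EuclideanSpace.single i 1)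

/-- The `L²(s)` norm of `u`. -/
def l2 {m : ℕ} (u : Euc m → ℂ) (s : Set (Euc m)) : ℝ :=
  Real.sqrt (∫ x in s, ‖u x‖ ^ 2)

/-- A point of `ℝ^{n+1}` from `(x', x_n)`. -/
def emb {n : ℕ} (x' : Euc n) (t : ℝ) : Euc (n+1) :=
  WithLp.toLp 2 (Fin.snoc (α := fun _ => ℝ) (fun j => x' j) t)

/-- The horizontal component `x'` of a point `x = (x', x_n)` of `ℝ^{n+1}`. -/
def low {n : ℕ} (x : Euc (n+1)) : Euc n := WithLp.toLp 2 (fun j : Fin n => x j.castSucc)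

/-- The vertical (last) component `x_n` of a point of `ℝ^{n+1}`. -/
def xlast {n : ℕ} (x : Euc (n+1)) : ℝ := x (Fin.last n)

/-- The upper half space `x_n > 0`. -/
def HPos (n : ℕ) : Set (Euc (n+1)) := {x | 0 < xlast x}

/-- The lower half space `x_n < 0`. -/
def HNeg (n : ℕ) : Set (Euc (n+1)) := {x | xlast x < 0}

/-- `u = H₊ u₊ + H₋ u₋`. -/
def pw {n : ℕ} (up um : Euc (n+1) → ℂ) (x : Euc (n+1)) : ℂ :=
  if 0 < xlast x then up x else if xlast x < 0 then um x else 0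

/-- The matrix `A(x)` is symmetric on `S`. -/
def MatSymmOn {m : ℕ} (A : Euc m → Matrix (Fin m) (Fin m) ℂ) (S : Set (Euc m)) : Prop :=
  ∀ x ∈ S, ∀ l j, A x l j = A x j l

/-- `λ₀ |ξ|² ≤ Re A(x) ξ·ξ ≤ λ₀⁻¹ |ξ|²` on `S`. -/
def ReElliptic {m : ℕ} (A : Euc m → Matrix (Fin m) (Fin m) ℂ) (S : Set (Euc m)) (lam : ℝ) : Prop :=
  ∀ x ∈ S, ∀ ξ : Fin m → ℝ,
    lam * (∑ j, ξ j ^ 2) ≤ ∑ l, ∑ j, (A x l j).re * ξ l * ξ j ∧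
    ∑ l, ∑ j, (A x l j).re * ξ l * ξ j ≤ lam⁻¹ * (∑ j, ξ j ^ 2)

/-- `Im A = γ N` with `λ₀ |ξ|² ≤ N(x) ξ·ξ ≤ λ₀⁻¹ |ξ|²` on `S`. -/
def ImElliptic {m : ℕ} (A : Euc m → Matrix (Fin m) (Fin m) ℂ) (S : Set (Euc m)) (lam gam : ℝ) : Prop :=
  ∀ x ∈ S, ∀ ξ : Fin m → ℝ,
    gam * (lam * (∑ j, ξ j ^ 2)) ≤ ∑ l, ∑ j, (A x l j).im * ξ l * ξ j ∧
    ∑ l, ∑ j, (A x l j).im * ξ l * ξ j ≤ gam * (lam⁻¹ * (∑ j, ξ j ^ 2))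

/-- `|A(x) − A(y)| ≤ M₀ |x − y|` on `S` (entrywise). -/
def LipCoefOn {m : ℕ} (A : Euc m → Matrix (Fin m) (Fin m) ℂ) (S : Set (Euc m)) (M0 : ℝ) : Prop :=
  ∀ x ∈ S, ∀ y ∈ S, ∀ l j, ‖A x l j - A y l j‖ ≤ M0 * dist x y

/-- The leading coefficient `A = M + iγN` is symmetric, elliptic and Lipschitz on `S`. -/
def GoodCoef {m : ℕ} (A : Euc m → Matrix (Fin m) (Fin m) ℂ) (S : Set (Euc m))
    (lam M0 gam : ℝ) : Prop :=
  MatSymmOn A S ∧ ReElliptic A S lam ∧ ImElliptic A S lam gam ∧ LipCoefOn A S M0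

/-- The (formal) second order operator `div(A ∇u)`. -/
def Lop {m : ℕ} (A : Euc m → Matrix (Fin m) (Fin m) ℂ) (u : Euc m → ℂ) (x : Euc m) : ℂ :=
  ∑ l, pd l (fun y => ∑ j, A y l j * pd j u y) x

/-- `div(A ∇u) + W·∇u + V u`. -/
def LopFull {m : ℕ} (A : Euc m → Matrix (Fin m) (Fin m) ℂ) (W : Euc m → Fin m → ℂ)
    (V : Euc m → ℂ) (u : Euc m → ℂ) (x : Euc m) : ℂ :=
  Lop A u x + (∑ j, W x j * pd j u x) + V x * u x

/-- The weight `φ(x) = α x_n/δ + β x_n²/(2δ²) − |x'|²/(2δ)` (a branch of `φ_δ`). -/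
def wphi {n : ℕ} (α β δ : ℝ) (x : Euc (n+1)) : ℝ :=
  α * xlast x / δ + β * (xlast x) ^ 2 / (2 * δ ^ 2) - ‖low x‖ ^ 2 / (2 * δ)

/-- The squared `H^{1/2}(ℝ^m)` seminorm `[f]²_{1/2}`. -/
def semi2 {m : ℕ} (f : Euc m → ℂ) : ℝ :=
  ∫ x : Euc m, ∫ y : Euc m, ‖f x - f y‖ ^ 2 / dist x y ^ (m + 1)

/-- The transmission datum `h₀ = u₊(·,0) − u₋(·,0)`. -/
def h0fun {n : ℕ} (up um : Euc (n+1) → ℂ) (x' : Euc n) : ℂ :=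
  up (emb x' 0) - um (emb x' 0)

/-- The transmission datum `h₁ = A₊∇u₊·e_n − A₋∇u₋·e_n` at `x_n = 0`. -/
def h1fun {n : ℕ} (Ap Am : Euc (n+1) → Matrix (Fin (n+1)) (Fin (n+1)) ℂ)
    (up um : Euc (n+1) → ℂ) (x' : Euc n) : ℂ :=
  (∑ j, Ap (emb x' 0) (Fin.last n) j * pd j up (emb x' 0)) -
  (∑ j, Am (emb x' 0) (Fin.last n) j * pd j um (emb x' 0))


/-- The interface-flattening map `Ψ_P(x', x_n) = (x', x_n − ψ(x'))` (with `P = 0`). -/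
def PsiMap {n : ℕ} (ψ : Euc n → ℝ) (x : Euc (n+1)) : Euc (n+1) :=
  emb (low x) (xlast x - ψ (low x))

/-- `ψ` is a `C^{1,1}` graph function with constants `ρ₀`, `K₀`:
`ψ(0) = 0`, `∇ψ(0) = 0`, `‖ψ‖_{C^{1,1}(B'_{ρ₀})} ≤ K₀`. -/
def C11GraphFn {n : ℕ} (ψ : Euc n → ℝ) (ρ0 K0 : ℝ) : Prop :=
  ψ 0 = 0 ∧ fderiv ℝ ψ 0 = 0 ∧ ContDiff ℝ 1 ψ ∧
  (∀ y ∈ Metric.ball (0 : Euc n) ρ0, |ψ y| ≤ K0 ∧ ‖fderiv ℝ ψ y‖ ≤ K0) ∧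
  LipschitzOnWith (Real.toNNReal K0) (fun y => fderiv ℝ ψ y) (Metric.ball 0 ρ0)

/-- The region `U₁ = {z ≥ −4R₂, R₁/(8a) < x_n < R₁/a}`, `z = φ_{δ,−}`, `a = α₊/δ`. -/
def regionU1 {n : ℕ} (αp αm β δ R1 R2 : ℝ) : Set (Euc (n+1)) :=
  {x | -4 * R2 ≤ wphi αm β δ x ∧ R1 / (8 * (αp / δ)) < xlast x ∧ xlast x < R1 / (αp / δ)}

/-- The region `U₂ = {−R₂ ≤ z ≤ R₁/(2a), x_n < R₁/(8a)}`. -/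
def regionU2 {n : ℕ} (αp αm β δ R1 R2 : ℝ) : Set (Euc (n+1)) :=
  {x | -R2 ≤ wphi αm β δ x ∧ wphi αm β δ x ≤ R1 / (2 * (αp / δ)) ∧
    xlast x < R1 / (8 * (αp / δ))}

/-- The region `U₃ = {z ≥ −4R₂, x_n < R₁/a}`. -/
def regionU3 {n : ℕ} (αp αm β δ R1 R2 : ℝ) : Set (Euc (n+1)) :=
  {x | -4 * R2 ≤ wphi αm β δ x ∧ xlast x < R1 / (αp / δ)}

lemma xlast_emb {n : ℕ} (x' : Euc n) (t : ℝ) : xlast (emb x' t) = t := by simp [xlast, emb]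
lemma low_emb {n : ℕ} (x' : Euc n) (t : ℝ) : low (emb x' t) = x' := by ext j; simp [low, emb]
lemma xlast_smul {n : ℕ} (c : ℝ) (x : Euc (n+1)) : xlast (c • x) = c * xlast x := rfl
lemma low_smul {n : ℕ} (c : ℝ) (x : Euc (n+1)) : low (c • x) = c • low x := by ext j; simp [low]
lemma norm_sq_split {n : ℕ} (x : Euc (n+1)) : ‖low x‖^2 + (xlast x)^2 = ‖x‖^2 := by
  have h1 : ‖x‖^2 = ∑ i, x i ^ 2 := by
    rw [EuclideanSpace.norm_eq, Real.sq_sqrt (by positivity)]; simp [sq_abs]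
  have h2 : ‖low x‖^2 = ∑ j, low x j ^ 2 := by
    rw [EuclideanSpace.norm_eq, Real.sq_sqrt (by positivity)]; simp [sq_abs]
  rw [h1, h2, Fin.sum_univ_castSucc]; rfl


set_option maxHeartbeats 1000000 in
/-- Inclusion of a small ball in the pulled-back middle region ([CW, Lemma 3.1]).
`Kη` is a bound for `‖η‖ = ‖ψ(x')/|x'|²‖_{L^∞}`. -/
theorem ball_subset_scaled_U2 (n : ℕ) (αp αm β δ θ R1 R2 ρ0 K0 Kη ρ2 r : ℝ)
    (hαm : 0 < αm) (hα : αm < αp) (hβ : 0 < β) (hδ : 0 < δ)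
    (hθ : 0 < θ) (hθ1 : θ ≤ 1) (hR1 : 0 < R1) (hR2 : 0 < R2)
    (hρ0 : 0 < ρ0) (hK0 : 0 < K0) (hKη : 0 ≤ Kη) (hρ2 : 0 < ρ2) (hr : 0 < r)
    (ψ : Euc n → ℝ) (hψ : C11GraphFn ψ ρ0 K0)
    (hη : ∀ y : Euc n, |ψ y| ≤ Kη * ‖y‖ ^ 2)
    (hρ2' : 2 * Kη * ρ2 + Kη ^ 2 * ρ2 ^ 2 < 1 / 2)
    (hrsmall : r < θ * min (δ * R1 / (6 * (αp / δ) * αm))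
        (min (2 * δ * R2 / (3 * αm))
        (min (R1 / (12 * (αp / δ)))
        (min (θ⁻¹ * ρ0)
        (min (αm * δ / (δ + β))
        (min ρ2 (2 * αm * δ / β))))))) :
    PsiMap ψ '' Metric.ball (0 : Euc (n+1)) r ⊆ θ • regionU2 αp αm β δ R1 R2 := by
  have hαp : 0 < αp := hαm.trans hα
  have ha : 0 < αp / δ := div_pos hαp hδ
  have hθne : θ ≠ 0 := ne_of_gt hθ
  rintro z ⟨x, hx, rfl⟩
  rw [Set.mem_smul_set_iff_inv_smul_mem₀ hθne]
  simp only [regionU2, Set.mem_setOf_eq]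
  set a := αp / δ with ha_def
  -- coordinates
  set s := ‖low x‖ with hs_def
  set xn := xlast x with hxn_def
  set ψv := ψ (low x) with hψv_def
  have hxl : xlast (θ⁻¹ • PsiMap ψ x) = θ⁻¹ * (xn - ψv) := by
    rw [xlast_smul]; unfold PsiMap; rw [xlast_emb]
  have hnorm : ‖low (θ⁻¹ • PsiMap ψ x)‖ = θ⁻¹ * s := by
    rw [low_smul]; unfold PsiMap; rw [low_emb, norm_smul, Real.norm_eq_abs,
      abs_of_pos (inv_pos.mpr hθ)]
  rw [wphi, hxl, hnorm]
  -- extract smallness facts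
  have hxball : ‖x‖ < r := by rwa [mem_ball, dist_zero_right] at hx
  have hs0 : (0:ℝ) ≤ s := norm_nonneg _
  have hsq : s^2 + xn^2 < r^2 := by
    rw [norm_sq_split x]
    exact pow_lt_pow_left₀ hxball (norm_nonneg x) two_ne_zero
  have hslt : s < r := by
    refine lt_of_pow_lt_pow_left₀ 2 hr.le ?_
    linarith only [hsq, sq_nonneg xn]
  have hxnr : |xn| < r := by
    refine lt_of_pow_lt_pow_left₀ 2 hr.le ?_
    rw [sq_abs]; linarith only [hsq, sq_nonneg s]
  have hψv : |ψv| ≤ Kη * s ^ 2 := hη (low x)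
  -- pieces of the min
  have g1 : r < θ * (δ * R1 / (6 * a * αm)) :=
    hrsmall.trans_le (by gcongr; exact min_le_left _ _)
  have g2 : r < θ * (2 * δ * R2 / (3 * αm)) :=
    hrsmall.trans_le (by gcongr; exact (min_le_right _ _).trans (min_le_left _ _))
  have g3 : r < θ * (R1 / (12 * a)) :=
    hrsmall.trans_le (mul_le_mul_of_nonneg_left ((min_le_right _ _).trans ((min_le_right _ _).trans (min_le_left _ _))) hθ.le)
  have g5 : r < θ * (αm * δ / (δ + β)) :=
    hrsmall.trans_le (mul_le_mul_of_nonneg_left ((min_le_right _ _).trans ((min_le_right _ _).trans ((min_le_right _ _).trans ((min_le_right _ _).trans (min_le_left _ _))))) hθ.le)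
  have g6 : r < θ * ρ2 :=
    hrsmall.trans_le (mul_le_mul_of_nonneg_left ((min_le_right _ _).trans ((min_le_right _ _).trans ((min_le_right _ _).trans ((min_le_right _ _).trans ((min_le_right _ _).trans (min_le_left _ _)))))) hθ.le)
  have g7 : r < θ * (2 * αm * δ / β) :=
    hrsmall.trans_le (mul_le_mul_of_nonneg_left ((min_le_right _ _).trans ((min_le_right _ _).trans ((min_le_right _ _).trans ((min_le_right _ _).trans ((min_le_right _ _).trans (min_le_right _ _)))))) hθ.le)
  -- division-free forms
  have F1 : r * (6 * a * αm) < θ * (δ * R1) := by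
    rw [show θ * (δ * R1 / (6 * a * αm)) = θ * (δ * R1) / (6 * a * αm) from by ring] at g1
    exact (lt_div_iff₀ (by positivity)).mp g1
  have F2 : r * (3 * αm) < θ * (2 * δ * R2) := by
    rw [show θ * (2 * δ * R2 / (3 * αm)) = θ * (2 * δ * R2) / (3 * αm) from by ring] at g2
    exact (lt_div_iff₀ (by positivity)).mp g2
  have F3 : r * (12 * a) < θ * R1 := by
    rw [show θ * (R1 / (12 * a)) = θ * R1 / (12 * a) from by ring] at g3
    exact (lt_div_iff₀ (by positivity)).mp g3
  have F5 : r * (δ + β) < θ * (αm * δ) := by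
    rw [show θ * (αm * δ / (δ + β)) = θ * (αm * δ) / (δ + β) from by ring] at g5
    exact (lt_div_iff₀ (by positivity)).mp g5
  have F7 : r * β < θ * (2 * αm * δ) := by
    rw [show θ * (2 * αm * δ / β) = θ * (2 * αm * δ) / β from by ring] at g7
    exact (lt_div_iff₀ hβ).mp g7
  have FK : Kη * ρ2 < 1/4 := by nlinarith only [hρ2', sq_nonneg (Kη * ρ2), hKη, hρ2]
  have hKr : Kη * r ≤ θ/4 :=
    calc Kη * r ≤ Kη * (θ * ρ2) := mul_le_mul_of_nonneg_left g6.le hKη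
    _ = (Kη * ρ2) * θ := by ring
    _ ≤ (1/4) * θ := mul_le_mul_of_nonneg_right FK.le hθ.le
    _ = θ/4 := by ring
  have hψ4 : |ψv| ≤ θ/4 * s :=
    calc |ψv| ≤ Kη * s ^ 2 := hψv
    _ = (Kη * s) * s := by ring
    _ ≤ (Kη * r) * s :=
        mul_le_mul_of_nonneg_right (mul_le_mul_of_nonneg_left hslt.le hKη) hs0
    _ ≤ (θ/4) * s := mul_le_mul_of_nonneg_right hKr hs0
    _ = θ/4 * s := by ring
  have hts : θ * s ≤ s := by linarith only [mul_nonneg (sub_nonneg.mpr hθ1) hs0]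
  obtain ⟨hxn1, hxn2⟩ := abs_lt.mp hxnr
  obtain ⟨hψ1, hψ2⟩ := abs_le.mp hψ4
  have hu1 : xn - ψv < 5 * r / 4 := by linarith
  have hu1' : -(5 * r / 4) < xn - ψv := by linarith
  have hu2sq : (xn - ψv)^2 ≤ (5 * r / 4)^2 := sq_le_sq' hu1'.le hu1.le
  have hrat : r < αm * θ := by nlinarith only [F5, mul_pos (mul_pos hθ hαm) hβ, add_pos hδ hβ]
  -- quadratic trick: δ s² + 2 αm δ θ |xn| ≤ 2 αm δ θ r
  have hA' : s^2 + 2 * αm * θ * |xn| ≤ 2 * αm * θ * r := by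
    have hq : (0:ℝ) ≤ 2 * αm * θ - (r + |xn|) := by linarith only [hxnr, hrat]
    nlinarith only [mul_nonneg (sub_nonneg.mpr hxnr.le) hq, sq_abs xn, hsq]
  have hA : δ * s^2 + 2 * αm * δ * θ * |xn| ≤ 2 * αm * δ * θ * r := by
    linarith only [mul_le_mul_of_nonneg_left hA' hδ.le]
  have hB : 2 * αm * δ * θ * |ψv| ≤ αm * δ * θ * r / 2 := by
    have h1 : 2 * αm * δ * θ * |ψv| ≤ 2 * αm * δ * θ * (θ/4 * s) :=
      mul_le_mul_of_nonneg_left hψ4 (by positivity)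
    have h2 : θ * s ≤ r := hts.trans hslt.le
    linarith only [h1, mul_le_mul_of_nonneg_left h2 (show (0:ℝ) ≤ αm * δ * θ / 2 by positivity)]
  have hneg_u : -(xn - ψv) ≤ |xn| + |ψv| := by
    have := le_abs_self ψv; have := neg_abs_le xn; linarith
  have hmulu : 2 * αm * δ * θ * (-(xn - ψv)) ≤ 2 * αm * δ * θ * (|xn| + |ψv|) :=
    mul_le_mul_of_nonneg_left hneg_u (by positivity)
  have hF2' : (r * (3 * αm)) * (δ * θ) < (θ * (2 * δ * R2)) * (δ * θ) :=
    mul_lt_mul_of_pos_right F2 (by positivity)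
  have N2 : 0 ≤ 2 * αm * δ * θ * (xn - ψv) + β * (xn - ψv)^2 - δ * s^2
      + 2 * δ^2 * θ^2 * R2 := by
    linarith only [hA, hB, hmulu, hF2', mul_nonneg hβ.le (sq_nonneg (xn - ψv)), mul_pos (mul_pos (pow_pos hδ 2) (pow_pos hθ 2)) hR2]
  have P1 : (a * αm * δ * θ) * (xn - ψv) ≤ (a * αm * δ * θ) * (5 * r / 4) :=
    mul_le_mul_of_nonneg_left hu1.le (by positivity)
  have P2 : (a * β) * (xn - ψv)^2 ≤ (a * β) * ((5 * r / 4)^2) :=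
    mul_le_mul_of_nonneg_left hu2sq (by positivity)
  have Q1 : (r * (6 * a * αm)) * (δ * θ) < (θ * (δ * R1)) * (δ * θ) :=
    mul_lt_mul_of_pos_right F1 (by positivity)
  have Q2 : (r * β) * (a * r) < (θ * (2 * αm * δ)) * (a * r) :=
    mul_lt_mul_of_pos_right F7 (by positivity)
  have N3 : 0 ≤ 2 * δ^2 * θ^2 * R1
      - 2 * a * (2 * αm * δ * θ * (xn - ψv) + β * (xn - ψv)^2 - δ * s^2) := by
    nlinarith only [P1, P2, Q1, Q2, mul_nonneg (mul_nonneg (by positivity : (0:ℝ) ≤ 2 * a) hδ.le) (sq_nonneg s), mul_pos (mul_pos (pow_pos hδ 2) (pow_pos hθ 2)) hR1, mul_pos (mul_pos (mul_pos ha hαm) hδ) (mul_pos hθ hr)]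
  have N1 : 0 < θ * R1 - 8 * a * (xn - ψv) := by
    linarith only [mul_lt_mul_of_pos_left hu1 ha, F3, mul_pos hθ hR1]
  refine ⟨?_, ?_, ?_⟩
  · have hEq : (αm * (θ⁻¹ * (xn - ψv)) / δ + β * (θ⁻¹ * (xn - ψv))^2 / (2 * δ^2)
        - (θ⁻¹ * s)^2 / (2 * δ)) + R2
        = (2 * αm * δ * θ * (xn - ψv) + β * (xn - ψv)^2 - δ * s^2
            + 2 * δ^2 * θ^2 * R2) / (2 * δ^2 * θ^2) := by
      field_simp
    have := div_nonneg N2 (by positivity : (0:ℝ) ≤ 2 * δ^2 * θ^2)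
    linarith only [hEq, this]
  · have hEq : R1 / (2 * a) - (αm * (θ⁻¹ * (xn - ψv)) / δ
        + β * (θ⁻¹ * (xn - ψv))^2 / (2 * δ^2) - (θ⁻¹ * s)^2 / (2 * δ))
        = (2 * δ^2 * θ^2 * R1
          - 2 * a * (2 * αm * δ * θ * (xn - ψv) + β * (xn - ψv)^2 - δ * s^2))
          / (4 * a * δ^2 * θ^2) := by
      field_simp; ring
    have := div_nonneg N3 (by positivity : (0:ℝ) ≤ 4 * a * δ^2 * θ^2)
    linarith only [hEq, this]
  · have hEq : R1 / (8 * a) - θ⁻¹ * (xn - ψv)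
        = (θ * R1 - 8 * a * (xn - ψv)) / (8 * a * θ) := by
      field_simp
    have := div_pos N1 (by positivity : (0:ℝ) < 8 * a * θ)
    linarith only [hEq, this]
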